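/- Let G be a t.d.l.c. group and let H be a compact subgroup of G. Then there exists a compact open subgroup U of G with H ≤ U. -/

import Mathlib

open Set Filter Pointwise

/-- Van Dantzig: a t.d.l.c. group has a compact open subgroup. -/
lemma exists_compact_open_subgroup
    (G : Type*) [Group G] [TopologicalSpace G] [IsTopologicalGroup G]
    [LocallyCompactSpace G] [TotallyDisconnectedSpace G] [T2Space G] :
    ∃ V : Subgroup G, IsCompact (V : Set G) ∧ IsOpen (V : Set G) := by
  -- find a compact clopen neighborhood K of 1
  obtain ⟨K₀, hK₀c, hK₀n⟩ := exists_compact_mem_nhds (1 : G)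
  obtain ⟨K, hKclopen, h1K, hKsub⟩ :=
    loc_compact_Haus_tot_disc_of_zero_dim.mem_nhds_iff.mp hK₀n
  have hKc : IsCompact K := hK₀c.of_isClosed_subset hKclopen.isClosed hKsub
  -- get an open symmetric nbhd O of 1 with O * K ⊆ K
  have tube : ∃ u : Set G, IsOpen u ∧ (1 : G) ∈ u ∧ u * K ⊆ K := by
    have hsub : {(1 : G)} ×ˢ K ⊆ (fun p : G × G => p.1 * p.2) ⁻¹' K := by
      rintro ⟨a, b⟩ ⟨ha, hb⟩
      simp only [mem_singleton_iff] at ha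
      simp [ha, hb, Set.mem_preimage]
    obtain ⟨u, v, hu, hv, h1u, hKv, huv⟩ :=
      generalized_tube_lemma isCompact_singleton hKc
        (continuous_mul.isOpen_preimage _ hKclopen.isOpen) hsub
    refine ⟨u, hu, h1u rfl, ?_⟩
    rintro x ⟨a, ha, b, hb, rfl⟩
    exact huv (Set.mk_mem_prod ha (hKv hb))
  obtain ⟨u, hu, h1u, huK⟩ := tube
  set O : Set G := u ∩ u⁻¹ with hO
  have hOopen : IsOpen O := hu.inter hu.inv
  have h1O : (1 : G) ∈ O := ⟨h1u, by simpa using h1u⟩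
  -- the stabilizer of K
  set V : Subgroup G := MulAction.stabilizer G K with hV
  have hOV : O ⊆ (V : Set G) := by
    intro g hg
    have hg1 : g • K ⊆ K := by
      intro x hx
      obtain ⟨k, hk, rfl⟩ := hx
      exact huK ⟨g, hg.1, k, hk, rfl⟩
    have hg2 : g⁻¹ • K ⊆ K := by
      intro x hx
      obtain ⟨k, hk, rfl⟩ := hx
      exact huK ⟨g⁻¹, hg.2, k, hk, rfl⟩
    have : g • K = K := by
      apply Subset.antisymm hg1
      intro x hx
      have : g⁻¹ • x ∈ K := hg2 ⟨x, hx, rfl⟩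
      exact ⟨g⁻¹ • x, this, by simp⟩
    exact this
  have hVopen : IsOpen (V : Set G) :=
    Subgroup.isOpen_of_mem_nhds V (Filter.mem_of_superset (hOopen.mem_nhds h1O) hOV)
  have hVK : (V : Set G) ⊆ K := by
    intro g hg
    have : g • K = K := hg
    rw [← this]
    exact ⟨1, h1K, by simp⟩
  exact ⟨V, hKc.of_isClosed_subset (V.isClosed_of_isOpen hVopen) hVK, hVopen⟩

/-- In a t.d.l.c. group, every compact subgroup is contained in a compact open
subgroup. -/
theorem compact_subgroup_le_compact_open_subgroup
    (G : Type*) [Group G] [TopologicalSpace G] [IsTopologicalGroup G]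
    [LocallyCompactSpace G] [TotallyDisconnectedSpace G] [T2Space G]
    (H : Subgroup G) (hH : IsCompact (H : Set G)) :
    ∃ U : Subgroup G, IsCompact (U : Set G) ∧ IsOpen (U : Set G) ∧ H ≤ U := by
  obtain ⟨V, hVc, hVo⟩ := exists_compact_open_subgroup G
  -- W = intersection of conjugates of V by elements of H
  set W : Subgroup G := ⨅ h : (H : Set G), V.comap ((MulAut.conj (h : G)).toMonoidHom) with hW
  have memW : ∀ x : G, x ∈ W ↔ ∀ h ∈ H, h * x * h⁻¹ ∈ V := by
    intro x
    rw [hW, Subgroup.mem_iInf]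
    constructor
    · intro hx h hh
      simpa [MulAut.conj] using hx ⟨h, hh⟩
    · intro hx h
      simpa [MulAut.conj] using hx (h : G) h.2
  -- W is open via the tube lemma
  have tube : ∃ u : Set G, IsOpen u ∧ (1 : G) ∈ u ∧ u ⊆ (W : Set G) := by
    have hsub : (H : Set G) ×ˢ {(1 : G)} ⊆ (fun p : G × G => p.1 * p.2 * p.1⁻¹) ⁻¹' V := by
      rintro ⟨a, b⟩ ⟨ha, hb⟩
      simp only [mem_singleton_iff] at hb
      simp only [Set.mem_preimage, hb, mul_one]
      simpa using one_mem V
    have hcont : Continuous fun p : G × G => p.1 * p.2 * p.1⁻¹ := by fun_prop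
    obtain ⟨u, v, hu, hv, hHu, h1v, huv⟩ :=
      generalized_tube_lemma hH isCompact_singleton
        (hcont.isOpen_preimage _ hVo) hsub
    refine ⟨v, hv, h1v rfl, ?_⟩
    intro x hx
    rw [SetLike.mem_coe, memW]
    intro h hh
    exact huv (Set.mk_mem_prod (hHu hh) hx)
  obtain ⟨u, hu, h1u, huW⟩ := tube
  have hWopen : IsOpen (W : Set G) :=
    Subgroup.isOpen_of_mem_nhds W (Filter.mem_of_superset (hu.mem_nhds h1u) huW)
  have hWV : W ≤ V := by
    intro x hx
    have := (memW x).mp hx 1 (one_mem H)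
    simpa using this
  have hWc : IsCompact (W : Set G) :=
    hVc.of_isClosed_subset (W.isClosed_of_isOpen hWopen) hWV
  -- H normalizes W
  have hnorm : ∀ h ∈ H, ∀ x ∈ W, h * x * h⁻¹ ∈ W := by
    intro h hh x hx
    rw [memW]
    intro k hk
    have : (k * h) * x * (k * h)⁻¹ ∈ V := (memW x).mp hx (k * h) (H.mul_mem hk hh)
    simpa [mul_assoc] using this
  -- U = H * W
  refine ⟨{ carrier := (H : Set G) * (W : Set G)
            one_mem' := ⟨1, one_mem H, 1, one_mem W, by simp⟩
            mul_mem' := ?_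
            inv_mem' := ?_ }, ?_, ?_, ?_⟩
  · rintro a b ⟨h₁, hh₁, w₁, hw₁, rfl⟩ ⟨h₂, hh₂, w₂, hw₂, rfl⟩
    refine ⟨h₁ * h₂, H.mul_mem hh₁ hh₂, (h₂⁻¹ * w₁ * h₂) * w₂,
      W.mul_mem (by simpa using hnorm h₂⁻¹ (H.inv_mem hh₂) w₁ hw₁) hw₂, ?_⟩
    group
  · rintro a ⟨h, hh, w, hw, rfl⟩
    refine ⟨h⁻¹, H.inv_mem hh, h * w⁻¹ * h⁻¹, hnorm h hh w⁻¹ (W.inv_mem hw), ?_⟩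
    group
  · exact hH.mul hWc
  · exact hWopen.mul_left
  · intro h hh
    exact ⟨h, hh, 1, one_mem W, by simp⟩
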